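/- Let P : G → M_d(𝕂) be a projector-valued map (P(g)² = P(g)) of constant rank n such that sup_{g ∈ G} max(‖P(g)‖, ‖Id − P(g)‖) < M for some M ≥ 1. Then there exists T : G → GL_d(𝕂) with T(g)⁻¹ P(g) T(g) equal to the block diagonal matrix diag(Id_n, 0) for all g, and sup_{g ∈ G} max(‖T(g)‖, ‖T(g)⁻¹‖) < ∞ (explicitly, ‖T(g)‖ ≤ d and ‖T(g)⁻¹‖ ≤ dM). -/

import Mathlib

open scoped Matrix.Norms.L2Operator

namespace Stmt19Aux

open Matrix Finset

variable {𝕂 : Type*} [RCLike 𝕂] {d : ℕ}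

private lemma coord_le_norm (x : EuclideanSpace 𝕂 (Fin d)) (i : Fin d) :
    ‖x i‖ ≤ ‖x‖ := by
  rw [EuclideanSpace.norm_eq, show ‖x i‖ = Real.sqrt (‖x i‖ ^ 2) by
    rw [Real.sqrt_sq (norm_nonneg _)]]
  exact Real.sqrt_le_sqrt <| Finset.single_le_sum
    (f := fun j => ‖x j‖ ^ 2) (fun j _ => sq_nonneg _) (Finset.mem_univ i)

private lemma norm_le_sum_norm (x : EuclideanSpace 𝕂 (Fin d)) : ‖x‖ ≤ ∑ i, ‖x i‖ := by
  rw [EuclideanSpace.norm_eq]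
  calc Real.sqrt (∑ i, ‖x i‖ ^ 2) ≤ Real.sqrt ((∑ i, ‖x i‖) ^ 2) :=
        Real.sqrt_le_sqrt (Finset.sum_sq_le_sq_sum_of_nonneg fun i _ => norm_nonneg _)
    _ = ∑ i, ‖x i‖ := Real.sqrt_sq (Finset.sum_nonneg fun i _ => norm_nonneg _)

private lemma toEL_coord (B : Matrix (Fin d) (Fin d) 𝕂) (x : EuclideanSpace 𝕂 (Fin d))
    (k : Fin d) : (toEuclideanLin B x) k = ∑ l, B k l * x l := by
  rw [toEuclideanLin_apply]
  simp [Matrix.mulVec, dotProduct]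

private lemma dot_eq_inner (B : Matrix (Fin d) (Fin d) 𝕂) (x y : EuclideanSpace 𝕂 (Fin d)) :
    ∑ l, (∑ k, (starRingEnd 𝕂) (x k) * B k l) * y l = (inner 𝕂 x (toEuclideanLin B y) : 𝕂) := by
  rw [PiLp.inner_apply]
  simp only [toEL_coord B y, RCLike.inner_apply, Finset.mul_sum, Finset.sum_mul]
  rw [Finset.sum_comm]
  congr 1; ext l; congr 1; ext k; ring

private lemma norm_toEL_le (B : Matrix (Fin d) (Fin d) 𝕂) (x : EuclideanSpace 𝕂 (Fin d)) :
    ‖toEuclideanLin B x‖ ≤ ‖B‖ * ‖x‖ :=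
  ((toEuclideanLin.trans LinearMap.toContinuousLinearMap) B).le_opNorm x

set_option maxHeartbeats 1000000 in
private lemma key {n : ℕ} (A : Matrix (Fin d) (Fin d) 𝕂)
    (hproj : A * A = A) (hrank : A.rank = n) (M : ℝ)
    (hA : ‖A‖ ≤ M) (hA' : ‖(1 : Matrix (Fin d) (Fin d) 𝕂) - A‖ ≤ M) :
    ∃ T : Matrix (Fin d) (Fin d) 𝕂, IsUnit T ∧
      T⁻¹ * A * T = Matrix.of (fun i j : Fin d => if i = j ∧ (i : ℕ) < n then 1 else 0) ∧
      ‖T‖ ≤ d ∧ ‖T⁻¹‖ ≤ d * M := by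
  classical
  set E := EuclideanSpace 𝕂 (Fin d)
  set f : E →ₗ[𝕂] E := toEuclideanLin A with hf
  -- f is idempotent
  have hmul : ∀ B C : Matrix (Fin d) (Fin d) 𝕂,
      toEuclideanLin (B * C) = (toEuclideanLin B).comp (toEuclideanLin C) := by
    intro B C
    simp only [toEuclideanLin_eq_toLin_orthonormal]
    exact Matrix.toLin_mul _ _ _ B C
  have hidem : ∀ x : E, f (f x) = f x := by
    intro x
    have := congrArg (fun g : E →ₗ[𝕂] E => g x) ((hmul A A).symm.trans (congrArg _ hproj))
    simpa using this
  -- ranks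
  have hVn : Module.finrank 𝕂 (LinearMap.range f) = n := by
    rw [hf, toEuclideanLin_eq_toLin_orthonormal, ← Matrix.rank_eq_finrank_range_toLin A
      ((EuclideanSpace.basisFun (Fin d) 𝕂).toBasis) ((EuclideanSpace.basisFun (Fin d) 𝕂).toBasis),
      hrank]
  have hrn : Module.finrank 𝕂 (LinearMap.range f) + Module.finrank 𝕂 (LinearMap.ker f)
      = d := by
    rw [LinearMap.finrank_range_add_finrank_ker f]
    simp [E]
  have hnd : n ≤ d := by omega
  have hWn : Module.finrank 𝕂 (LinearMap.ker f) = d - n := by omega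
  -- orthonormal bases
  let bV : OrthonormalBasis (Fin n) 𝕂 (LinearMap.range f) :=
    (stdOrthonormalBasis 𝕂 (LinearMap.range f)).reindex (finCongr hVn)
  let bW : OrthonormalBasis (Fin (d - n)) 𝕂 (LinearMap.ker f) :=
    (stdOrthonormalBasis 𝕂 (LinearMap.ker f)).reindex (finCongr hWn)
  let u : Fin d → E := fun i =>
    if h : (i : ℕ) < n then (bV ⟨i, h⟩ : E) else (bW ⟨(i : ℕ) - n, by omega⟩ : E)
  have hfu : ∀ i : Fin d, f (u i) = if (i : ℕ) < n then u i else 0 := by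
    intro i
    by_cases h : (i : ℕ) < n
    · simp only [u, dif_pos h, if_pos h]
      obtain ⟨y, hy⟩ := (bV ⟨i, h⟩).2
      rw [← hy]; exact hidem y
    · simp only [u, dif_neg h, if_neg h]
      exact (bW _).2
  have hnormu : ∀ i : Fin d, ‖u i‖ = 1 := by
    intro i
    by_cases h : (i : ℕ) < n
    · simp only [u, dif_pos h, Submodule.coe_norm]
      exact bV.orthonormal.1 _
    · simp only [u, dif_neg h, Submodule.coe_norm]
      exact bW.orthonormal.1 _
  -- inner products
  have hinner : ∀ i j : Fin d, ((i : ℕ) < n ↔ (j : ℕ) < n) →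
      (inner 𝕂 (u i) (u j) : 𝕂) = if i = j then 1 else 0 := by
    intro i j hij
    by_cases h : (i : ℕ) < n
    · have h' : (j : ℕ) < n := hij.mp h
      simp only [u, dif_pos h, dif_pos h']
      rw [← Submodule.coe_inner, orthonormal_iff_ite.mp bV.orthonormal]
      simp [Fin.ext_iff]
    · have h' : ¬ (j : ℕ) < n := fun hh => h (hij.mpr hh)
      simp only [u, dif_neg h, dif_neg h']
      rw [← Submodule.coe_inner, orthonormal_iff_ite.mp bW.orthonormal]
      have : (i : ℕ) - n = (j : ℕ) - n ↔ i = j := by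
        rw [Fin.ext_iff]; omega
      simp [Fin.ext_iff, this]
  -- the matrices
  set T : Matrix (Fin d) (Fin d) 𝕂 := Matrix.of (fun i j => u j i) with hT
  set S : Matrix (Fin d) (Fin d) 𝕂 := Matrix.of (fun i j =>
    if (i : ℕ) < n then ∑ k, (starRingEnd 𝕂) (u i k) * A k j
    else ∑ k, (starRingEnd 𝕂) (u i k) * (1 - A) k j) with hS
  set D : Matrix (Fin d) (Fin d) 𝕂 :=
    Matrix.of (fun i j : Fin d => if i = j ∧ (i : ℕ) < n then 1 else 0) with hD
  have hone : toEuclideanLin (1 - A) = LinearMap.id - f := by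
    rw [map_sub, hf]
    congr 1
    simp only [toEuclideanLin_eq_toLin_orthonormal]
    exact Matrix.toLin_one _
  have hfu' : ∀ j : Fin d, toEuclideanLin (1 - A) (u j) =
      if (j : ℕ) < n then 0 else u j := by
    intro j
    rw [hone]
    by_cases h : (j : ℕ) < n <;>
      simp [LinearMap.sub_apply, hfu j, h]
  -- S * T = 1
  have hST : S * T = 1 := by
    ext i j
    rw [Matrix.mul_apply]
    by_cases h : (i : ℕ) < n
    · have : ∑ l, S i l * T l j = ∑ l, (∑ k, (starRingEnd 𝕂) (u i k) * A k l) * (u j) l := by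
        apply Finset.sum_congr rfl
        intro l _
        simp [hS, hT, if_pos h]
      rw [this, dot_eq_inner A (u i) (u j), hfu j]
      by_cases h' : (j : ℕ) < n
      · rw [if_pos h', hinner i j (by omega)]
        simp [Matrix.one_apply]
      · rw [if_neg h', inner_zero_right]
        have : i ≠ j := by intro hh; subst hh; exact h' h
        simp [Matrix.one_apply, this]
    · have : ∑ l, S i l * T l j
          = ∑ l, (∑ k, (starRingEnd 𝕂) (u i k) * (1 - A) k l) * (u j) l := by
        apply Finset.sum_congr rfl
        intro l _
        simp [hS, hT, if_neg h]
      rw [this, dot_eq_inner (1 - A) (u i) (u j), hfu' j]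
      by_cases h' : (j : ℕ) < n
      · rw [if_pos h', inner_zero_right]
        have : i ≠ j := by intro hh; subst hh; exact h h'
        simp [Matrix.one_apply, this]
      · rw [if_neg h', hinner i j (by omega)]
        simp [Matrix.one_apply]
  have hunit : IsUnit T := (Matrix.isUnit_iff_isUnit_det T).mpr (Matrix.isUnit_det_of_left_inverse hST)
  have hTinv : T⁻¹ = S := Matrix.inv_eq_left_inv hST
  -- A * T = T * D
  have hAT : A * T = T * D := by
    ext i j
    rw [Matrix.mul_apply, Matrix.mul_apply]
    have hL : ∑ k, A i k * T k j = (toEuclideanLin A (u j)) i := by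
      rw [toEL_coord]
      apply Finset.sum_congr rfl
      intro k _
      simp [hT]
    have hR : ∑ k, T i k * D k j = if (j : ℕ) < n then (u j) i else 0 := by
      simp only [hT, hD, Matrix.of_apply, mul_ite, mul_one, mul_zero, ite_and]
      rw [Finset.sum_ite_eq' Finset.univ j (fun k => if (k : ℕ) < n then u k i else 0)]
      simp
    rw [hL, hR, hfu j]
    by_cases h' : (j : ℕ) < n
    · simp [h']
    · simp [h']
  -- conjugation identity
  have hconj : T⁻¹ * A * T = D := by
    rw [hTinv, mul_assoc, hAT, ← mul_assoc, hST, one_mul]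
  -- norm of T
  have hTnorm : ‖T‖ ≤ (d : ℝ) := by
    rw [Matrix.l2_opNorm_def]
    apply ContinuousLinearMap.opNorm_le_bound _ (by positivity)
    intro x
    have hx : ((toEuclideanLin.trans LinearMap.toContinuousLinearMap) T) x
        = ∑ j, x j • u j := by
      ext k
      have h1 : (toEuclideanLin T x) k = ∑ l, T k l * x l := toEL_coord T x k
      have h2 : ((∑ j, x j • u j : E)) k = ∑ j, x j * u j k := by
        have := map_sum (PiLp.projₗ (𝕜 := 𝕂) 2 (fun _ : Fin d => 𝕂) k)
          (fun j => x j • u j) Finset.univ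
        rw [WithLp.ofLp_sum, Finset.sum_apply]
        rfl
      show (toEuclideanLin T x) k = _
      rw [h1, h2]
      apply Finset.sum_congr rfl
      intro l _
      simp [hT]; ring
    rw [hx]
    calc ‖∑ j, x j • u j‖ ≤ ∑ j, ‖x j • u j‖ := norm_sum_le _ _
      _ = ∑ j, ‖x j‖ := by simp [norm_smul, hnormu]
      _ ≤ ∑ _j : Fin d, ‖x‖ := Finset.sum_le_sum fun j _ => coord_le_norm x j
      _ = d * ‖x‖ := by simp [Finset.sum_const, mul_comm]
  -- norm of S
  have hSnorm : ‖T⁻¹‖ ≤ (d : ℝ) * M := by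
    rw [hTinv, Matrix.l2_opNorm_def]
    have hM0 : (0 : ℝ) ≤ M := le_trans (norm_nonneg A) hA
    apply ContinuousLinearMap.opNorm_le_bound _ (by positivity)
    intro x
    have hcoord : ∀ i : Fin d, ‖(toEuclideanLin S x) i‖ ≤ M * ‖x‖ := by
      intro i
      have h1 : (toEuclideanLin S x) i = ∑ l, S i l * x l := toEL_coord S x i
      by_cases h : (i : ℕ) < n
      · have h2 : ∑ l, S i l * x l = (inner 𝕂 (u i) (toEuclideanLin A x) : 𝕂) := by
          rw [← dot_eq_inner A (u i) x]
          apply Finset.sum_congr rfl; intro l _; simp [hS, if_pos h]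
        rw [h1, h2]
        calc ‖(inner 𝕂 (u i) (toEuclideanLin A x) : 𝕂)‖
            ≤ ‖u i‖ * ‖toEuclideanLin A x‖ := norm_inner_le_norm _ _
          _ ≤ 1 * (‖A‖ * ‖x‖) := by
              rw [hnormu i]
              exact mul_le_mul_of_nonneg_left (norm_toEL_le A x) zero_le_one
          _ ≤ M * ‖x‖ := by
              rw [one_mul]
              exact mul_le_mul_of_nonneg_right hA (norm_nonneg x)
      · have h2 : ∑ l, S i l * x l = (inner 𝕂 (u i) (toEuclideanLin (1 - A) x) : 𝕂) := by
          rw [← dot_eq_inner (1 - A) (u i) x]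
          apply Finset.sum_congr rfl; intro l _; simp [hS, if_neg h]
        rw [h1, h2]
        calc ‖(inner 𝕂 (u i) (toEuclideanLin (1 - A) x) : 𝕂)‖
            ≤ ‖u i‖ * ‖toEuclideanLin (1 - A) x‖ := norm_inner_le_norm _ _
          _ ≤ 1 * (‖1 - A‖ * ‖x‖) := by
              rw [hnormu i]
              exact mul_le_mul_of_nonneg_left (norm_toEL_le (1 - A) x) zero_le_one
          _ ≤ M * ‖x‖ := by
              rw [one_mul]
              exact mul_le_mul_of_nonneg_right hA' (norm_nonneg x)
    calc ‖(LinearMap.toContinuousLinearMap (toEuclideanLin S)) x‖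
        ≤ ∑ i, ‖(toEuclideanLin S x) i‖ := norm_le_sum_norm _
      _ ≤ ∑ _i : Fin d, M * ‖x‖ := Finset.sum_le_sum fun i _ => hcoord i
      _ = (d : ℝ) * M * ‖x‖ := by simp [Finset.sum_const]; ring
  exact ⟨T, hunit, hconj, hTnorm, hSnorm⟩

end Stmt19Aux

/-- A projector-valued map of constant rank `n` with uniformly bounded projectors and
complements can be uniformly diagonalized: there is `T : G → GL_d(𝕂)` with
`T(g)⁻¹ P(g) T(g) = diag(Id_n, 0)`, `‖T(g)‖ ≤ d` and `‖T(g)⁻¹‖ ≤ d·M`.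
Norms are the operator norms induced by the Euclidean norm on `𝕂^d`. -/
theorem stmt_19 {G 𝕂 : Type*} [RCLike 𝕂] {d n : ℕ}
    (P : G → Matrix (Fin d) (Fin d) 𝕂)
    (hproj : ∀ g : G, P g * P g = P g)
    (hrank : ∀ g : G, (P g).rank = n)
    (M : ℝ) (hM : 1 ≤ M)
    (hbound : ∀ g : G, max ‖P g‖ ‖(1 : Matrix (Fin d) (Fin d) 𝕂) - P g‖ < M) :
    ∃ T : G → Matrix (Fin d) (Fin d) 𝕂,
      (∀ g : G, IsUnit (T g)) ∧
      (∀ g : G, (T g)⁻¹ * P g * T g =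
        Matrix.of fun i j : Fin d => if i = j ∧ (i : ℕ) < n then 1 else 0) ∧
      (∀ g : G, ‖T g‖ ≤ d) ∧
      (∀ g : G, ‖(T g)⁻¹‖ ≤ d * M) := by
  choose T h1 h2 h3 h4 using fun g => Stmt19Aux.key (P g) (hproj g) (hrank g) M
    (le_of_lt ((le_max_left _ _).trans_lt (hbound g)))
    (le_of_lt ((le_max_right _ _).trans_lt (hbound g)))
  exact ⟨T, h1, h2, h3, h4⟩
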